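/- Conversely, given an integral domain R, a chain of nonempty subsets ∅ ≠ I₁ ⊂ I₂ ⊂ ⋯ ⊂ I_r = {1,…,n}, and nonzero elements x_{I₁},…,x_{I_r} ∈ R with x_{I_r} invertible, there exists a unique ring homomorphism χ : A_n → R with χ(q) = 0, χ(e_{I_j}) = x_{I_j} for all j, and χ(e_I) = 0 for every nonempty I not in the chain. -/

import Mathlib

/-- Conversely: given an integral domain `R`, a chain of nonempty subsets
`∅ ≠ I₁ ⊂ I₂ ⊂ ⋯ ⊂ I_r = {1,…,n}` and nonzero elements `x_{I₁},…,x_{I_r} ∈ R`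
with `x_{I_r}` invertible, there is a unique ring homomorphism `χ : A_n → R` with
`χ(q) = 0`, `χ(e_{I_j}) = x_{I_j}` and `χ(e_I) = 0` for every nonempty `I` not in
the chain.  A character of `A_n` with `χ(q) = 0` is modelled by its values
`f I = χ(e_I)`, subject to `f ∅ = 1` and the specialized relations
`f I * f J = 0^{yz} * (f (I∪J) * f (I∩J))`. -/
theorem stmt_4 (n r : ℕ) (hr : 0 < r) (R : Type*) [CommRing R] [IsDomain R]
    (I : Fin r → Finset (Fin n)) (hmono : StrictMono I)
    (hne : (I ⟨0, hr⟩).Nonempty) (htop : I ⟨r - 1, Nat.sub_lt hr one_pos⟩ = Finset.univ)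
    (x : Fin r → R) (hx : ∀ j, x j ≠ 0)
    (hxu : IsUnit (x ⟨r - 1, Nat.sub_lt hr one_pos⟩)) :
    ∃! f : Finset (Fin n) → R,
      f ∅ = 1 ∧
      (∀ A B : Finset (Fin n),
        f A * f B =
          (0 : R) ^ ((A.card - (A ∩ B).card) * (B.card - (A ∩ B).card)) *
            (f (A ∪ B) * f (A ∩ B))) ∧
      (∀ j, f (I j) = x j) ∧
      (∀ J : Finset (Fin n), J.Nonempty → (∀ j, J ≠ I j) → f J = 0) := by
  classical
  have hIinj : Function.Injective I := hmono.injective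
  have hIne : ∀ j, (I j).Nonempty := by
    intro j
    exact hne.mono (hmono.monotone (by simp [Fin.le_def]))
  set f : Finset (Fin n) → R := fun J =>
    if h : ∃ j, J = I j then x h.choose else if J = ∅ then 1 else 0 with hf
  have hfI : ∀ j, f (I j) = x j := by
    intro j
    have h : ∃ k, I j = I k := ⟨j, rfl⟩
    simp only [hf, dif_pos h]
    congr 1
    exact hIinj h.choose_spec.symm
  have hfe : f ∅ = 1 := by
    have h : ¬ ∃ j, (∅ : Finset (Fin n)) = I j := by
      rintro ⟨j, hj⟩; exact (hIne j).ne_empty hj.symm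
    simp [hf, h]
  have hf0 : ∀ J : Finset (Fin n), J.Nonempty → (∀ j, J ≠ I j) → f J = 0 := by
    intro J hJ hJn
    have h : ¬ ∃ j, J = I j := fun ⟨j, hj⟩ => hJn j hj
    simp [hf, h, hJ.ne_empty]
  have hcomp : ∀ J : Finset (Fin n), f J ≠ 0 → J = ∅ ∨ ∃ j, J = I j := by
    intro J hJ
    by_contra h
    push_neg at h
    exact hJ (hf0 J h.1 h.2)
  refine ⟨f, ⟨hfe, ?_, hfI, hf0⟩, ?_⟩
  · intro A B
    by_cases hAB : A ⊆ B
    · have h1 : A ∩ B = A := Finset.inter_eq_left.mpr hAB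
      have h2 : A ∪ B = B := Finset.union_eq_right.mpr hAB
      rw [h1, h2]
      simp [mul_comm]
    by_cases hBA : B ⊆ A
    · have h1 : A ∩ B = B := Finset.inter_eq_right.mpr hBA
      have h2 : A ∪ B = A := Finset.union_eq_left.mpr hBA
      rw [h1, h2]
      simp
    · have hy : (A ∩ B).card < A.card := by
        refine Finset.card_lt_card (Finset.ssubset_iff_subset_ne.mpr
          ⟨Finset.inter_subset_left, fun h => hAB ?_⟩)
        rw [← h]; exact Finset.inter_subset_right
      have hz : (A ∩ B).card < B.card := by
        refine Finset.card_lt_card (Finset.ssubset_iff_subset_ne.mpr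
          ⟨Finset.inter_subset_right, fun h => hBA ?_⟩)
        rw [← h]; exact Finset.inter_subset_left
      rw [zero_pow (Nat.mul_ne_zero (by omega) (by omega)), zero_mul]
      have key : f A = 0 ∨ f B = 0 := by
        by_contra h
        push_neg at h
        rcases hcomp A h.1 with hA | ⟨j, hA⟩
        · exact hAB (by simp [hA])
        rcases hcomp B h.2 with hB | ⟨k, hB⟩
        · exact hBA (by simp [hB])
        rcases le_total j k with hjk | hjk
        · exact hAB (hA ▸ hB ▸ hmono.monotone hjk)
        · exact hBA (hA ▸ hB ▸ hmono.monotone hjk)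
      rcases key with h | h <;> simp [h]
  · rintro g ⟨hg1, _, hg3, hg4⟩
    funext J
    by_cases hJe : J = ∅
    · rw [hJe, hg1, hfe]
    by_cases hJc : ∃ j, J = I j
    · obtain ⟨j, rfl⟩ := hJc
      rw [hg3, hfI]
    · push_neg at hJc
      rw [hg4 J (Finset.nonempty_iff_ne_empty.mpr hJe) hJc,
        hf0 J (Finset.nonempty_iff_ne_empty.mpr hJe) hJc]
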